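/- Let D be a regular (216, 43, 10, 8)-PDS in the group G = (ℤ/2ℤ)³ × (ℤ/3ℤ)³, and let H be a subgroup of G of order 72 (equivalently, of index 3). Then |H ∩ D| = 11 or |H ∩ D| = 19. -/

import Mathlib

set_option maxRecDepth 8000


/-- The number of representations of `g` as `a * b⁻¹` with `a, b ∈ D`. -/
def diffReps {G : Type*} [Group G] [DecidableEq G] (D : Finset G) (g : G) : ℕ :=
  ((D ×ˢ D).filter (fun p => p.1 * p.2⁻¹ = g)).card

/-- `D` is a `(v, k, λ, μ)`-partial difference set in the finite group `G`. -/
def IsPDS {G : Type*} [Group G] [Fintype G] [DecidableEq G]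
    (D : Finset G) (v k l m : ℕ) : Prop :=
  Fintype.card G = v ∧ D.card = k ∧
  ∀ g : G, g ≠ 1 →
    (g ∈ D → diffReps D g = l) ∧ (g ∉ D → diffReps D g = m)

/-- `D` is regular: it does not contain the identity and is closed under inverses. -/
def IsRegularPDS {G : Type*} [Group G] (D : Finset G) : Prop :=
  (1 : G) ∉ D ∧ ∀ d : G, d ∈ D ↔ d⁻¹ ∈ D

/-- A regular PDS `D` is trivial if `D ∪ {e}` or `G \ D` is a subgroup of `G`. -/
def IsTrivialPDS {G : Type*} [Group G] (D : Finset G) : Prop :=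
  (∃ H : Subgroup G, (H : Set G) = insert (1 : G) ↑D) ∨
  (∃ H : Subgroup G, (H : Set G) = (↑D : Set G)ᶜ)

/-- The group `(ℤ/2ℤ)³ × (ℤ/3ℤ)³`, written multiplicatively. -/
abbrev G216 : Type := Multiplicative ((Fin 3 → ZMod 2) × (Fin 3 → ZMod 3))

section Aux

open Finset

lemma diffReps_one {G : Type*} [Group G] [DecidableEq G] (D : Finset G) :
    diffReps D 1 = D.card := by
  unfold diffReps
  have : ((D ×ˢ D).filter (fun p => p.1 * p.2⁻¹ = 1)) = D.image (fun d => (d, d)) := by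
    ext ⟨x, y⟩
    simp only [mem_filter, mem_product, mem_image, mul_inv_eq_one, Prod.mk.injEq]
    constructor
    · rintro ⟨⟨hx, _⟩, rfl⟩; exact ⟨x, hx, rfl, rfl⟩
    · rintro ⟨d, hd, rfl, rfl⟩; exact ⟨⟨hd, hd⟩, rfl⟩
  rw [this, Finset.card_image_of_injective]
  intro a b h; exact (Prod.mk.injEq _ _ _ _ ▸ h).1

end Aux

/-- A regular `(216,43,10,8)`-PDS in `(ℤ/2ℤ)³ × (ℤ/3ℤ)³` meets every subgroup of
order 72 in either 11 or 19 elements. -/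
theorem index_three_subgroup_meets_43_PDS (D : Finset G216)
    (hD : IsPDS D 216 43 10 8) (hreg : IsRegularPDS D)
    (H : Subgroup G216) (hH : Nat.card H = 72) :
    ((H : Set G216) ∩ ↑D).ncard = 11 ∨ ((H : Set G216) ∩ ↑D).ncard = 19 := by
  classical
  obtain ⟨hcard, hk, hlm⟩ := hD
  obtain ⟨h1D, hinv⟩ := hreg
  set Q := G216 ⧸ H with hQdef
  haveI : Fintype Q := Fintype.ofFinite Q
  set φ : G216 → Q := fun x => QuotientGroup.mk x with hphi
  set f : Q → ℕ := fun t => (D.filter (fun x => φ x = t)).card with hf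
  -- card of the quotient is 3
  have hQ3 : Fintype.card Q = 3 := by
    have h1 := Subgroup.card_mul_index H
    have hG : Nat.card G216 = 216 := by rw [Nat.card_eq_fintype_card, hcard]
    have hidx : H.index = 3 := by rw [hH, hG] at h1; omega
    rw [← Nat.card_eq_fintype_card, ← Subgroup.index]; exact hidx
  -- first count: sum of fiber sizes is 43
  have hsum1 : ∑ t : Q, f t = 43 := by
    rw [← hk]
    exact (Finset.card_eq_sum_card_fiberwise (f := φ) (fun x _ => Finset.mem_univ (φ x))).symm
  -- structure of Q: {1, u, u⁻¹}
  have one_mem : (1 : Q) ∈ (Finset.univ : Finset Q) := Finset.mem_univ _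
  have herase2 : ((Finset.univ : Finset Q).erase 1).card = 2 := by
    rw [Finset.card_erase_of_mem one_mem, Finset.card_univ, hQ3]
  obtain ⟨u, v, huv, herase⟩ := Finset.card_eq_two.mp herase2
  have hu1 : u ≠ 1 := by
    have : u ∈ (Finset.univ : Finset Q).erase 1 := by rw [herase]; simp
    exact (Finset.mem_erase.mp this).1
  have huinv : u⁻¹ = v := by
    have h2 : u⁻¹ ≠ 1 := inv_ne_one.mpr hu1
    have hmem : u⁻¹ ∈ ({u, v} : Finset Q) := by
      rw [← herase]; exact Finset.mem_erase.mpr ⟨h2, Finset.mem_univ _⟩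
    have hne : u⁻¹ ≠ u := by
      intro h
      have hsq : u ^ 2 = 1 := by
        rw [pow_two]
        nth_rewrite 1 [← h]
        exact inv_mul_cancel u
      have h3 : u ^ 3 = 1 := by
        have hp := pow_card_eq_one' (x := u)
        rwa [Nat.card_eq_fintype_card, hQ3] at hp
      apply hu1
      calc u = u ^ 2 * u := by rw [hsq, one_mul]
        _ = u ^ 3 := (pow_succ u 2).symm
        _ = 1 := h3
    rcases Finset.mem_insert.mp hmem with h | h
    · exact absurd h hne
    · exact Finset.mem_singleton.mp h
  -- inverse symmetry of fibers
  have hfinv : ∀ t : Q, f t = f t⁻¹ := by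
    intro t
    refine Finset.card_nbij' (fun x => x⁻¹) (fun x => x⁻¹) ?_ ?_ ?_ ?_
    · intro x hx
      simp only [Finset.mem_coe, Finset.mem_filter] at hx ⊢
      refine ⟨(hinv x).mp hx.1, ?_⟩
      show φ x⁻¹ = t⁻¹
      rw [hphi]
      simp only [QuotientGroup.mk_inv]
      rw [← hx.2]
    · intro x hx
      simp only [Finset.mem_coe, Finset.mem_filter] at hx ⊢
      refine ⟨(hinv x).mp hx.1, ?_⟩
      show φ x⁻¹ = t
      rw [hphi]
      simp only [QuotientGroup.mk_inv]
      rw [← inv_inv t, ← hx.2]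
    · intro x _
      exact inv_inv x
    · intro x _
      exact inv_inv x
  -- decompose univ
  have huniv : (Finset.univ : Finset Q) = insert 1 {u, v} := by
    rw [← herase, Finset.insert_erase one_mem]
  have h1u : (1 : Q) ∉ ({u, v} : Finset Q) := by
    have := herase ▸ (Finset.notMem_erase (1 : Q) Finset.univ)
    exact this
  have hsum_split : ∀ g : Q → ℕ, ∑ t : Q, g t = g 1 + g u + g v := by
    intro g
    rw [huniv, Finset.sum_insert h1u, Finset.sum_pair huv]
    ring
  have hfuv : f v = f u := by rw [← huinv, ← hfinv]
  -- a + 2b = 43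
  have hab : f 1 + 2 * f u = 43 := by
    have := hsum1
    rw [hsum_split] at this
    rw [hfuv] at this
    omega
  -- second count setup
  set S := (Finset.univ : Finset G216).filter (fun g => g ∈ H) with hS
  have hScard : S.card = 72 := by
    have : Fintype.card H = (Finset.univ.filter (fun g : G216 => g ∈ H)).card := by
      rw [← Fintype.card_subtype]
    rw [hS, ← this, ← Nat.card_eq_fintype_card, hH]
  have ha : (S.filter (fun g => g ∈ D)).card = f 1 := by
    simp only [hf]
    congr 1
    ext x
    simp only [Finset.mem_filter, Finset.mem_univ, true_and, hS, hphi]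
    constructor
    · rintro ⟨hxH, hxD⟩
      exact ⟨hxD, (QuotientGroup.eq_one_iff x).mpr hxH⟩
    · rintro ⟨hxD, hx1⟩
      exact ⟨(QuotientGroup.eq_one_iff x).mp hx1, hxD⟩
  -- Claim B : ∑_{g ∈ S} diffReps D g = 611 + 2 * f 1
  have h1S : (1 : G216) ∈ S := by simp [hS, Subgroup.one_mem]
  have hB : ∑ g ∈ S, diffReps D g = 611 + 2 * f 1 := by
    rw [← Finset.add_sum_erase _ _ h1S, diffReps_one, hk]
    rw [← Finset.sum_filter_add_sum_filter_not (S.erase 1) (fun g => g ∈ D)]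
    have e1 : (S.erase 1).filter (fun g => g ∈ D) = S.filter (fun g => g ∈ D) := by
      ext x
      simp only [Finset.mem_filter, Finset.mem_erase]
      constructor
      · rintro ⟨⟨_, hx⟩, hxD⟩; exact ⟨hx, hxD⟩
      · rintro ⟨hx, hxD⟩
        refine ⟨⟨?_, hx⟩, hxD⟩
        rintro rfl; exact h1D hxD
    have hsum10 : ∑ g ∈ (S.erase 1).filter (fun g => g ∈ D), diffReps D g = 10 * f 1 := by
      rw [Finset.sum_congr rfl (fun g hg => ?_), Finset.sum_const, e1, ha, smul_eq_mul,
        mul_comm]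
      simp only [Finset.mem_filter, Finset.mem_erase] at hg
      exact (hlm g hg.1.1).1 hg.2
    have hcards : ((S.erase 1).filter (fun g => g ∈ D)).card
        + ((S.erase 1).filter (fun g => ¬ g ∈ D)).card = 71 := by
      rw [Finset.card_filter_add_card_filter_not, Finset.card_erase_of_mem h1S,
        hScard]
    have hsum8 : ∑ g ∈ (S.erase 1).filter (fun g => ¬ g ∈ D), diffReps D g
        = 8 * (71 - f 1) := by
      rw [Finset.sum_congr rfl (fun g hg => ?_), Finset.sum_const, smul_eq_mul, mul_comm]
      · congr 1
        rw [e1, ha] at hcards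
        omega
      simp only [Finset.mem_filter, Finset.mem_erase] at hg
      exact (hlm g hg.1.1).2 hg.2
    rw [hsum10, hsum8]
    have hf71 : f 1 ≤ 71 := by rw [e1, ha] at hcards; omega
    omega
  -- Claim A : ∑_{g ∈ S} diffReps D g = ∑ t, f t * f t
  have hA : ∑ g ∈ S, diffReps D g = ∑ t : Q, f t * f t := by
    set T := (D ×ˢ D).filter (fun p => φ p.1 = φ p.2) with hT
    have hmemT : ∀ p : G216 × G216, p ∈ T ↔ p ∈ D ×ˢ D ∧ p.1 * p.2⁻¹ ∈ H := by
      intro p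
      simp only [hT, Finset.mem_filter, and_congr_right_iff]
      intro _
      rw [hphi]
      show (QuotientGroup.mk p.1 = QuotientGroup.mk p.2) ↔ _
      rw [QuotientGroup.eq]
      constructor
      · intro h
        have := H.inv_mem h
        simpa [mul_comm] using this
      · intro h
        have := H.inv_mem h
        simpa [mul_comm] using this
    have hL : ∑ g ∈ S, diffReps D g = T.card := by
      rw [Finset.card_eq_sum_card_fiberwise (f := fun p => p.1 * p.2⁻¹) (t := S)
        (fun p hp => by
          simp only [hS, Finset.mem_coe, Finset.mem_filter, Finset.mem_univ, true_and]
          exact ((hmemT p).mp hp).2)]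
      apply Finset.sum_congr rfl
      intro g hg
      simp only [hS, Finset.mem_filter, Finset.mem_univ, true_and] at hg
      unfold diffReps
      congr 1
      ext p
      simp only [Finset.mem_filter, hmemT p]
      constructor
      · rintro ⟨hp, heq⟩; exact ⟨⟨hp, heq ▸ hg⟩, heq⟩
      · rintro ⟨⟨hp, _⟩, heq⟩; exact ⟨hp, heq⟩
    have hR : T.card = ∑ t : Q, f t * f t := by
      rw [Finset.card_eq_sum_card_fiberwise (f := fun p => φ p.1) (t := Finset.univ)
        (fun _ _ => Finset.mem_univ _)]
      apply Finset.sum_congr rfl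
      intro t _
      have hfib : T.filter (fun p => φ p.1 = t)
          = (D.filter fun x => φ x = t) ×ˢ (D.filter fun x => φ x = t) := by
        ext ⟨x, y⟩
        simp only [hT, Finset.mem_filter, Finset.mem_product]
        constructor
        · rintro ⟨⟨⟨hx, hy⟩, heq⟩, rfl⟩
          exact ⟨⟨hx, rfl⟩, hy, heq.symm⟩
        · rintro ⟨⟨hx, rfl⟩, hy, hyt⟩
          exact ⟨⟨⟨hx, hy⟩, hyt.symm⟩, rfl⟩
      rw [hfib, Finset.card_product]
    rw [hL, hR]
  -- combine the two counts
  have key : f 1 * f 1 + 2 * (f u * f u) = 611 + 2 * f 1 := by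
    have := hA.symm.trans hB
    rw [hsum_split (fun t => f t * f t)] at this
    rw [hfuv] at this
    omega
  -- the goal equals f 1
  have hgoal : ((H : Set G216) ∩ ↑D).ncard = f 1 := by
    have hset : ((H : Set G216) ∩ ↑D) = ↑(S.filter (fun g => g ∈ D)) := by
      ext x
      simp [hS]
    rw [hset, Set.ncard_coe_finset, ha]
  rw [hgoal]
  -- solve the quadratic
  have hZ : ((f 1 : ℚ) - 11) * ((f 1 : ℚ) - 19) = 0 := by
    have e1 : (f 1 : ℚ) + 2 * (f u : ℚ) = 43 := by exact_mod_cast hab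
    have e2 : (f 1 : ℚ) * (f 1 : ℚ) + 2 * ((f u : ℚ) * (f u : ℚ))
        = 611 + 2 * (f 1 : ℚ) := by exact_mod_cast key
    linear_combination (2/3 : ℚ) * e2 + (((f 1 : ℚ) - 2 * (f u : ℚ) - 43) / 3) * e1
  rcases mul_eq_zero.mp hZ with h | h
  · left
    have : (f 1 : ℚ) = 11 := by linarith [sub_eq_zero.mp h]
    exact_mod_cast this
  · right
    have : (f 1 : ℚ) = 19 := by linarith [sub_eq_zero.mp h]
    exact_mod_cast this
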